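/- Let p be a nonzero vector in four-dimensional Euclidean space ℝ⁴. Then the one-loop Feynman integral with momentum cutoff λ diverges logarithmically with a universal coefficient: there exists a real constant C (depending on p) such that the quantity ∫_{{k ∈ ℝ⁴ : ‖k‖ ≤ λ}} 1/(‖k‖² · ‖k + p‖²) dk − 2π² · log λ converges to C as λ → ∞. -/

import Mathlib

open MeasureTheory Metric Set Filter

namespace Stmt11Aux

noncomputable section

local notation "E4" => EuclideanSpace ℝ (Fin 4)

lemma hdim4 : Module.finrank ℝ (EuclideanSpace ℝ (Fin 4)) = 4 := by
  simp [finrank_euclideanSpace]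

/-- Integrability of a radial function on ℝ⁴ from 1-d integrability of `y^3 * f y`. -/
lemma integrable_fun_norm {f : ℝ → ℝ}
    (h : IntegrableOn (fun y => y ^ 3 * f y) (Set.Ioi (0:ℝ))) :
    Integrable (fun x : E4 => f ‖x‖) := by
  have hms : MeasurableSet ({(0:E4)}ᶜ) := (measurableSet_singleton _).compl
  have hI : Integrable (fun r : Ioi (0:ℝ) => f r) (Measure.volumeIoiPow 3) := by
    rw [Measure.volumeIoiPow, integrable_withDensity_iff
      (by fun_prop) (by filter_upwards with x using ENNReal.ofReal_lt_top)]
    have e : (fun r : Ioi (0:ℝ) => f r * (ENNReal.ofReal (r.1 ^ 3)).toReal)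
        = (fun y : ℝ => f y * y ^ 3) ∘ (Subtype.val : Ioi (0:ℝ) → ℝ) := by
      funext r
      simp [ENNReal.toReal_ofReal (pow_nonneg (le_of_lt r.2) 3)]
    rw [e, ← (MeasurableEmbedding.subtype_coe measurableSet_Ioi).integrable_map_iff,
      map_comap_subtype_coe measurableSet_Ioi]
    exact h.congr_fun (fun y _ => by ring) measurableSet_Ioi
  have hprod : Integrable (fun z : sphere (0:E4) 1 × Ioi (0:ℝ) => f z.2)
      ((volume : Measure E4).toSphere.prod
        (Measure.volumeIoiPow (Module.finrank ℝ (EuclideanSpace ℝ (Fin 4)) - 1))) := by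
    rw [hdim4]
    simpa using (integrable_const (1:ℝ)).mul_prod hI
  have h0 : Integrable (fun x : ({(0:E4)}ᶜ : Set E4) => f ‖x.1‖)
      ((volume : Measure E4).comap Subtype.val) := by
    have := ((volume : Measure E4).measurePreserving_homeomorphUnitSphereProd.integrable_comp_emb
      (Homeomorph.measurableEmbedding _)
      (g := fun z : sphere (0:E4) 1 × Ioi (0:ℝ) => f z.2)).2 hprod
    have e : ((fun z : sphere (0:E4) 1 × Ioi (0:ℝ) => f z.2) ∘ (homeomorphUnitSphereProd E4))
        = (fun x : ({(0:E4)}ᶜ : Set E4) => f ‖x.1‖) := by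
      funext x; simp
    rwa [e] at this
  have := ((MeasurableEmbedding.subtype_coe hms).integrable_map_iff
    (g := fun x : E4 => f ‖x‖)).2 (by exact h0)
  rwa [map_comap_subtype_coe hms, MeasureTheory.restrict_compl_singleton] at this

lemma integrable_global_inv_sq (R : ℝ) :
    Integrable (fun x : E4 => if ‖x‖ ≤ R then (‖x‖ ^ 2)⁻¹ else 0) := by
  refine integrable_fun_norm (f := fun y : ℝ => if y ≤ R then (y ^ 2)⁻¹ else 0) ?_
  have hI : IntegrableOn (fun y : ℝ => y) (Ioc (0:ℝ) R) :=
    continuous_id.integrableOn_Ioc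
  have := (hI.integrable_indicator measurableSet_Ioc).integrableOn (s := Ioi (0:ℝ))
  refine this.congr_fun (fun y hy => ?_) measurableSet_Ioi
  have hy0 : (0:ℝ) < y := hy
  simp only [indicator_apply, mem_Ioc]
  by_cases hyR : y ≤ R
  · rw [if_pos (show 0 < y ∧ y ≤ R from ⟨hy0, hyR⟩), if_pos hyR]
    field_simp
  · rw [if_neg (show ¬(0 < y ∧ y ≤ R) from fun hm => hyR hm.2), if_neg hyR, mul_zero]

lemma vol_ball : ((volume : Measure E4) (ball 0 1)).toReal = Real.pi ^ 2 / 2 := by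
  rw [EuclideanSpace.volume_ball]
  have hcard : Fintype.card (Fin 4) = 4 := by simp
  rw [hcard]
  have hg : Real.Gamma ((4:ℕ) / 2 + 1) = 2 := by
    rw [show ((4:ℕ):ℝ) / 2 + 1 = (2:ℕ) + 1 by norm_num, Real.Gamma_nat_eq_factorial]
    norm_num
  rw [hg]
  have hsq : Real.sqrt Real.pi ^ 4 = Real.pi ^ 2 := by
    rw [show (4:ℕ) = 2*2 from rfl, pow_mul, Real.sq_sqrt Real.pi_pos.le]
  rw [hsq]
  simp [ENNReal.toReal_ofReal, Real.pi_pos.le]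
  positivity

lemma annulus_integral (l : ℝ) (hl : 1 ≤ l) :
    ∫ k : E4, (if 1 ≤ ‖k‖ ∧ ‖k‖ ≤ l then (‖k‖ ^ 4)⁻¹ else 0)
      = 2 * Real.pi ^ 2 * Real.log l := by
  have key := integral_fun_norm_addHaar (volume : Measure E4)
    (fun y => if 1 ≤ y ∧ y ≤ l then (y ^ 4)⁻¹ else 0)
  rw [hdim4] at key
  rw [key]
  have hinner : (∫ y in Ioi (0:ℝ), y ^ (4-1) • (if 1 ≤ y ∧ y ≤ l then (y ^ 4)⁻¹ else 0))
      = Real.log l := by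
    have e : EqOn (fun y : ℝ => y ^ (4-1) • (if 1 ≤ y ∧ y ≤ l then (y ^ 4)⁻¹ else 0))
        (indicator (Icc 1 l) (fun y => y⁻¹)) (Ioi 0) := by
      intro y hy
      have hy0 : (0:ℝ) < y := hy
      simp only [indicator_apply, mem_Icc, smul_eq_mul]
      by_cases hc : 1 ≤ y ∧ y ≤ l
      · rw [if_pos hc, if_pos hc]
        field_simp
      · rw [if_neg hc, if_neg hc, mul_zero]
    rw [setIntegral_congr_fun measurableSet_Ioi e, setIntegral_indicator measurableSet_Icc,
      show Ioi (0:ℝ) ∩ Icc 1 l = Icc 1 l from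
        inter_eq_right.2 (fun y hy => lt_of_lt_of_le one_pos hy.1),
      integral_Icc_eq_integral_Ioc, ← intervalIntegral.integral_of_le hl,
      integral_inv (by rw [Set.uIcc_of_le hl]; intro hmem; linarith [hmem.1])]
    simp
  rw [hinner, measureReal_def, vol_ball]
  simp only [nsmul_eq_mul, smul_eq_mul]
  ring

section Main

variable (p : EuclideanSpace ℝ (Fin 4)) (hp : p ≠ 0)

/-- The cutoff function `g` whose ball integrals produce `2π² log l`. -/
def gcut (k : E4) : ℝ := if 1 ≤ ‖k‖ then (‖k‖ ^ 4)⁻¹ else 0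

lemma gcut_measurable : Measurable gcut := by
  refine Measurable.ite (measurableSet_le measurable_const measurable_norm) ?_ measurable_const
  fun_prop

lemma gcut_bound (k : E4) : ‖gcut k‖ ≤ 1 := by
  unfold gcut
  by_cases hc : 1 ≤ ‖k‖
  · rw [if_pos hc, Real.norm_eq_abs, abs_of_nonneg (by positivity)]
    rw [inv_le_one_iff₀]
    right
    exact one_le_pow₀ hc
  · rw [if_neg hc]
    simp

lemma gcut_integrableOn (l : ℝ) : IntegrableOn gcut (closedBall (0:E4) l) := by
  have hc : IntegrableOn (fun _ : E4 => (1:ℝ)) (closedBall (0:E4) l) :=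
    integrableOn_const measure_closedBall_lt_top.ne
  exact hc.mono' gcut_measurable.aestronglyMeasurable.restrict
    (ae_of_all _ fun k => gcut_bound k)

lemma gcut_setIntegral (l : ℝ) (hl : 1 ≤ l) :
    ∫ k in closedBall (0:E4) l, gcut k = 2 * Real.pi ^ 2 * Real.log l := by
  classical
  rw [← integral_indicator measurableSet_closedBall]
  rw [← annulus_integral l hl]
  congr 1
  funext k
  rw [indicator_apply, mem_closedBall, dist_zero_right]
  unfold gcut
  by_cases h1 : ‖k‖ ≤ l <;> by_cases h2 : 1 ≤ ‖k‖ <;> simp [h1, h2]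

/-- The Feynman integrand. -/
def fint (k : E4) : ℝ := 1 / (‖k‖ ^ 2 * ‖k + p‖ ^ 2)

lemma fint_measurable : Measurable (fint p) := by
  unfold fint
  fun_prop

include hp in
lemma fint_integrableOn (l : ℝ) : IntegrableOn (fint p) (closedBall (0:E4) l) := by
  have hp0 : (0:ℝ) < ‖p‖ := norm_pos_iff.2 hp
  -- first piece
  have h1 : IntegrableOn (fun k : E4 => (‖k‖ ^ 2)⁻¹) (closedBall (0:E4) l) := by
    refine ((integrable_global_inv_sq l).integrableOn).congr_fun (fun k hk => ?_)
      measurableSet_closedBall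
    beta_reduce
    rw [if_pos (by simpa [dist_zero_right] using hk)]
  -- second piece, translated
  have h2 : IntegrableOn (fun k : E4 => (‖k + p‖ ^ 2)⁻¹) (closedBall (0:E4) l) := by
    have hG : Integrable (fun k : E4 =>
        if ‖k + p‖ ≤ l + ‖p‖ then (‖k + p‖ ^ 2)⁻¹ else 0) :=
      (integrable_global_inv_sq (l + ‖p‖)).comp_add_right p
    refine (hG.integrableOn).congr_fun (fun k hk => ?_) measurableSet_closedBall
    have hk' : ‖k‖ ≤ l := by simpa [dist_zero_right] using hk
    beta_reduce
    rw [if_pos (le_trans (norm_add_le k p) (by linarith))]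
  -- pointwise bound
  have key : ∀ a b : ℝ, ‖p‖ / 2 ≤ b → 1 / (a ^ 2 * b ^ 2) ≤ (2 / ‖p‖) ^ 2 * (a ^ 2)⁻¹ := by
    intro a b hb
    have hb0 : (0:ℝ) < b := lt_of_lt_of_le (by positivity) hb
    have e : 1 / (a ^ 2 * b ^ 2) = (a ^ 2)⁻¹ * (b ^ 2)⁻¹ := by
      rw [one_div, mul_inv]
    rw [e, mul_comm ((2 / ‖p‖) ^ 2) _]
    refine mul_le_mul_of_nonneg_left ?_ (by positivity)
    have : (b ^ 2)⁻¹ ≤ ((‖p‖ / 2) ^ 2)⁻¹ := by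
      gcongr
    calc (b ^ 2)⁻¹ ≤ ((‖p‖ / 2) ^ 2)⁻¹ := this
      _ = (2 / ‖p‖) ^ 2 := by
          rw [← inv_pow, inv_div]
  refine ((h1.add h2).const_mul ((2 / ‖p‖) ^ 2)).mono'
    (fint_measurable p).aestronglyMeasurable.restrict (ae_of_all _ fun k => ?_)
  rw [Real.norm_eq_abs, abs_of_nonneg (by unfold fint; positivity)]
  rcases le_or_gt (‖p‖ / 2) ‖k + p‖ with hc | hc
  · calc fint p k ≤ (2 / ‖p‖) ^ 2 * (‖k‖ ^ 2)⁻¹ := key _ _ hc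
      _ ≤ (2 / ‖p‖) ^ 2 * ((‖k‖ ^ 2)⁻¹ + (‖k + p‖ ^ 2)⁻¹) := by
          refine mul_le_mul_of_nonneg_left ?_ (by positivity)
          exact le_add_of_nonneg_right (by positivity)
  · have hk : ‖p‖ / 2 ≤ ‖k‖ := by
      have : ‖p‖ ≤ ‖k + p‖ + ‖k‖ := by
        calc ‖p‖ = ‖(k + p) - k‖ := by rw [add_sub_cancel_left]
          _ ≤ ‖k + p‖ + ‖k‖ := norm_sub_le _ _
      linarith
    have e : fint p k = 1 / (‖k + p‖ ^ 2 * ‖k‖ ^ 2) := by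
      unfold fint; rw [mul_comm]
    calc fint p k = 1 / (‖k + p‖ ^ 2 * ‖k‖ ^ 2) := e
      _ ≤ (2 / ‖p‖) ^ 2 * (‖k + p‖ ^ 2)⁻¹ := key _ _ hk
      _ ≤ (2 / ‖p‖) ^ 2 * ((‖k‖ ^ 2)⁻¹ + (‖k + p‖ ^ 2)⁻¹) := by
          refine mul_le_mul_of_nonneg_left ?_ (by positivity)
          exact le_add_of_nonneg_left (by positivity)

include hp in
lemma diff_integrable : Integrable (fun k : E4 => fint p k - gcut k) := by
  have hp0 : (0:ℝ) < ‖p‖ := norm_pos_iff.2 hp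
  set R : ℝ := 2 * ‖p‖ + 2 with hR
  have hmeas : Measurable (fun k : E4 => fint p k - gcut k) :=
    (fint_measurable p).sub gcut_measurable
  rw [← integrableOn_univ, ← union_compl_self (closedBall (0:E4) R)]
  refine IntegrableOn.union ((fint_integrableOn p hp R).sub (gcut_integrableOn R)) ?_
  -- on the complement
  have hbound : Integrable (fun k : E4 => 384 * ‖p‖ * ((1 + ‖k‖) ^ (-(5:ℝ)))) := by
    refine (integrable_one_add_norm ?_).const_mul _
    rw [hdim4]; norm_num
  refine (hbound.integrableOn).mono' hmeas.aestronglyMeasurable.restrict ?_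
  rw [ae_restrict_iff' measurableSet_closedBall.compl]
  refine ae_of_all _ fun k hk => ?_
  have ha : R < ‖k‖ := by
    simpa [dist_zero_right] using hk
  set a : ℝ := ‖k‖ with haa
  set b : ℝ := ‖k + p‖ with hbb
  have ha1 : (1:ℝ) ≤ a := by simp only [hR] at ha; linarith
  have ha0 : (0:ℝ) < a := by linarith
  have hpa : ‖p‖ ≤ a / 2 - 1 := by simp only [hR] at ha; linarith
  have hb2 : a - ‖p‖ ≤ b := by
    have : a ≤ b + ‖p‖ := by
      calc a = ‖(k + p) + (-p)‖ := by rw [add_neg_cancel_right]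
        _ ≤ ‖k + p‖ + ‖p‖ := by simpa using norm_add_le (k + p) (-p)
    linarith
  have hb : a / 2 ≤ b := by linarith
  have hb0 : (0:ℝ) < b := by linarith
  have hgk : gcut k = (a ^ 4)⁻¹ := by unfold gcut; rw [if_pos ha1]
  have keyeq : fint p k - gcut k = (a ^ 2 - b ^ 2) / (a ^ 4 * b ^ 2) := by
    unfold fint
    rw [hgk, ← haa, ← hbb]
    field_simp
  have habs : |a ^ 2 - b ^ 2| ≤ 3 * a * ‖p‖ := by
    have h1 : |a - b| ≤ ‖p‖ := by
      have := abs_norm_sub_norm_le k (k + p)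
      simpa using this
    have h2 : b ≤ a + ‖p‖ := norm_add_le k p
    have e : |a ^ 2 - b ^ 2| = |a - b| * (a + b) := by
      rw [show a ^ 2 - b ^ 2 = (a - b) * (a + b) by ring, abs_mul,
        abs_of_nonneg (show (0:ℝ) ≤ a + b by positivity)]
    rw [e]
    calc |a - b| * (a + b) ≤ ‖p‖ * (3 * a) :=
        mul_le_mul h1 (by linarith) (by positivity) (norm_nonneg p)
      _ = 3 * a * ‖p‖ := by ring
  rw [keyeq, Real.norm_eq_abs, abs_div, abs_of_pos (show (0:ℝ) < a ^ 4 * b ^ 2 by positivity)]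
  have hrpow : ((1:ℝ) + a) ^ (-(5:ℝ)) = ((1 + a) ^ (5:ℕ))⁻¹ := by
    rw [Real.rpow_neg (by positivity), ← Real.rpow_natCast (1 + a) 5]
    norm_num
  rw [hrpow]
  calc |a ^ 2 - b ^ 2| / (a ^ 4 * b ^ 2)
      ≤ (3 * a * ‖p‖) / (a ^ 4 * (a / 2) ^ 2) := by
        refine div_le_div₀ (by positivity) habs (by positivity) ?_
        gcongr
      _ = 12 * ‖p‖ / a ^ 5 := by
        field_simp
        ring
      _ ≤ 384 * ‖p‖ * ((1 + a) ^ (5:ℕ))⁻¹ := by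
        rw [← div_eq_mul_inv, div_le_div_iff₀ (by positivity) (by positivity)]
        have hpow : (1 + a) ^ (5:ℕ) ≤ (2 * a) ^ (5:ℕ) :=
          pow_le_pow_left₀ (by positivity) (by linarith) 5
        have h32 : 12 * ‖p‖ * (1 + a) ^ (5:ℕ) ≤ 12 * ‖p‖ * (2 * a) ^ (5:ℕ) :=
          mul_le_mul_of_nonneg_left hpow (by positivity)
        have he : 12 * ‖p‖ * (2 * a) ^ (5:ℕ) = 384 * ‖p‖ * a ^ 5 := by ring
        linarith

end Main

end

end Stmt11Aux

open Stmt11Aux in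
/-- Logarithmic divergence of the one-loop Feynman integral in massless φ⁴ theory:
for `p ≠ 0` in ℝ⁴, `∫_{‖k‖ ≤ λ} dk/(‖k‖²‖k+p‖²) - 2π² log λ` converges as `λ → ∞`. -/
theorem stmt_11 (p : EuclideanSpace ℝ (Fin 4)) (hp : p ≠ 0) :
    ∃ C : ℝ, Filter.Tendsto
      (fun l : ℝ =>
        (∫ k in Metric.closedBall (0 : EuclideanSpace ℝ (Fin 4)) l,
          1 / (‖k‖ ^ 2 * ‖k + p‖ ^ 2)) - 2 * Real.pi ^ 2 * Real.log l)
      Filter.atTop (nhds C) := by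
  have hdiff := diff_integrable p hp
  refine ⟨∫ k, (fint p k - gcut k), ?_⟩
  have htend : Filter.Tendsto
      (fun l : ℝ => ∫ k in Metric.closedBall (0 : EuclideanSpace ℝ (Fin 4)) l,
        (fint p k - gcut k))
      Filter.atTop (nhds (∫ k, (fint p k - gcut k))) := by
    have := MeasureTheory.tendsto_integral_filter_of_dominated_convergence
      (μ := (volume : Measure (EuclideanSpace ℝ (Fin 4))))
      (l := (Filter.atTop : Filter ℝ))
      (F := fun l k => Set.indicator (Metric.closedBall (0 : EuclideanSpace ℝ (Fin 4)) l)
        (fun k => fint p k - gcut k) k)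
      (f := fun k => fint p k - gcut k)
      (bound := fun k => ‖fint p k - gcut k‖)
      (by
        filter_upwards with l
        exact (hdiff.aestronglyMeasurable).indicator measurableSet_closedBall)
      (by
        filter_upwards with l
        refine ae_of_all _ fun k => ?_
        exact norm_indicator_le_norm_self _ k)
      hdiff.norm
      (by
        refine ae_of_all _ fun k => ?_
        refine Filter.Tendsto.congr' ?_ tendsto_const_nhds
        filter_upwards [Filter.eventually_ge_atTop ‖k‖] with l hl
        rw [Set.indicator_of_mem (by simpa [dist_zero_right] using hl)])
    simpa [integral_indicator measurableSet_closedBall] using this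
  refine htend.congr' ?_
  filter_upwards [Filter.eventually_ge_atTop (1:ℝ)] with l hl
  rw [integral_sub ((fint_integrableOn p hp l)) (gcut_integrableOn l),
    gcut_setIntegral l hl]
  rfl
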